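/- Let a/b and c/d be rational numbers written in lowest terms with b, d > 0 and ad − bc = 1 (so c/d < a/b and they are Farey neighbors). Then a rational number z satisfies c/d ≤ z < a/b and is a Farey neighbor of a/b if and only if z = (c + ka)/(d + kb) for some integer k ≥ 0; moreover each fraction (c + ka)/(d + kb) with k ≥ 0 is already in lowest terms. -/

import Mathlib

/-- Two rationals are Farey neighbors (joined by an edge in the Farey graph) if,
writing them in lowest terms `a/b` and `c/d` with positive denominators,
`|a*d − b*c| = 1`. -/
def FareyNeighbor (x y : ℚ) : Prop :=
  (x.num * (y.den : ℤ) - y.num * (x.den : ℤ)).natAbs = 1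

theorem stmt12 (a b c d : ℤ) (hb : 0 < b) (hd : 0 < d)
    (hab : Int.gcd a b = 1) (hcd : Int.gcd c d = 1)
    (h : a * d - b * c = 1) :
    (∀ z : ℚ,
      ((c : ℚ) / (d : ℚ) ≤ z ∧ z < (a : ℚ) / (b : ℚ) ∧ FareyNeighbor z ((a : ℚ) / (b : ℚ))) ↔
        ∃ k : ℕ, z = ((c : ℚ) + (k : ℚ) * (a : ℚ)) / ((d : ℚ) + (k : ℚ) * (b : ℚ))) ∧
    ∀ k : ℕ, Int.gcd (c + (k : ℤ) * a) (d + (k : ℤ) * b) = 1 := by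
  have hab' : Nat.Coprime a.natAbs b.natAbs := hab
  have hnum : ((a : ℚ) / b).num = a := Rat.num_div_eq_of_coprime hb hab'
  have hden : (((a : ℚ) / b).den : ℤ) = b := Rat.den_div_eq_of_coprime hb hab'
  -- part 2
  have part2 : ∀ k : ℕ, Int.gcd (c + (k : ℤ) * a) (d + (k : ℤ) * b) = 1 := by
    intro k
    exact Int.isCoprime_iff_gcd_eq_one.mp ⟨-b, a, by linear_combination h⟩
  refine ⟨fun z => ⟨?_, ?_⟩, part2⟩
  · rintro ⟨h1, h2, h3⟩
    obtain ⟨p, hp⟩ : ∃ p : ℤ, p = z.num := ⟨_, rfl⟩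
    obtain ⟨q, hq⟩ : ∃ q : ℤ, q = (z.den : ℤ) := ⟨_, rfl⟩
    have hq0 : 0 < q := by rw [hq]; exact Int.natCast_pos.mpr z.pos
    have hzeq : z = (p : ℚ) / q := by rw [hp, hq]; exact_mod_cast (Rat.num_div_den z).symm
    unfold FareyNeighbor at h3
    rw [hnum, hden, ← hp, ← hq] at h3
    have hlt : p * b < a * q := by
      rw [hzeq, div_lt_div_iff₀ (by exact_mod_cast hq0) (by exact_mod_cast hb)] at h2
      exact_mod_cast h2
    have heq1 : a * q - p * b = 1 := by omega
    have hkey : a * (q - d) = b * (p - c) := by linear_combination heq1 - h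
    have hbdvd : b ∣ q - d := by
      have hco : IsCoprime b a := Int.isCoprime_iff_gcd_eq_one.mpr
        (by rw [Int.gcd_comm]; exact hab)
      exact hco.dvd_of_dvd_mul_left ⟨p - c, hkey⟩
    obtain ⟨k, hk⟩ := hbdvd
    have hpc : p - c = k * a := by
      have : b * (p - c) = b * (k * a) := by rw [← hkey, hk]; ring
      exact mul_left_cancel₀ hb.ne' this
    have hpe : p = c + k * a := by linarith
    have hqe : q = d + b * k := by linarith
    have hle : c * q ≤ p * d := by
      rw [hzeq, div_le_div_iff₀ (by exact_mod_cast hd) (by exact_mod_cast hq0)] at h1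
      exact_mod_cast h1
    have hle2 : c * (d + b * k) ≤ (c + k * a) * d := by rw [← hpe, ← hqe]; exact hle
    have h7 : 0 ≤ k * (a * d - b * c) := by nlinarith [hle2]
    rw [h] at h7
    have hk0 : 0 ≤ k := by linarith
    lift k to ℕ using hk0
    refine ⟨k, ?_⟩
    rw [hzeq, hpe, hqe]
    push_cast
    ring_nf
  · rintro ⟨k, rfl⟩
    set e : ℤ := c + (k : ℤ) * a with he
    set f : ℤ := d + (k : ℤ) * b with hf
    have hf0 : 0 < f := by positivity
    have hg : Nat.Coprime e.natAbs f.natAbs := part2 k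
    have hcast : ((c : ℚ) + (k : ℚ) * a) / ((d : ℚ) + (k : ℚ) * b) = (e : ℚ) / (f : ℚ) := by
      rw [he, hf]; push_cast; ring
    rw [hcast]
    have hnum2 : ((e : ℚ) / f).num = e := Rat.num_div_eq_of_coprime hf0 hg
    have hden2 : (((e : ℚ) / f).den : ℤ) = f := Rat.den_div_eq_of_coprime hf0 hg
    have hdQ : (0:ℚ) < (f : ℚ) := by exact_mod_cast hf0
    have hbQ : (0:ℚ) < (b : ℚ) := by exact_mod_cast hb
    have hdQ' : (0:ℚ) < (d : ℚ) := by exact_mod_cast hd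
    refine ⟨?_, ?_, ?_⟩
    · rw [div_le_div_iff₀ hdQ' hdQ]
      have : c * f ≤ e * d := by rw [he, hf]; nlinarith [Int.natCast_nonneg k]
      exact_mod_cast this
    · rw [div_lt_div_iff₀ hdQ hbQ]
      have : e * b < a * f := by rw [he, hf]; nlinarith [Int.natCast_nonneg k]
      exact_mod_cast this
    · unfold FareyNeighbor
      rw [hnum, hden, hnum2, hden2]
      have : e * b - a * f = -1 := by rw [he, hf]; linear_combination -h
      omega
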